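/- Let k be a field and u ∈ Matrix (Fin s) (Fin s) (Matrix (Fin n) (Fin n) k). Suppose there exists a model for u, i.e. a Hopf k-algebra H, a corepresentation matrix v : Matrix (Fin s) (Fin s) H, and an algebra homomorphism π : H →ₐ[k] Matrix (Fin n) (Fin n) k with v.map π = u. Then there exists a sequence w : ℕ → Matrix (Fin s) (Fin s) (Matrix (Fin n) (Fin n) k) with w 0 = u and, for every p, w p * (w (p+1))ᵀ = 1 and (w (p+1))ᵀ * w p = 1; equivalently, the sequence u₀ := u, u_{p+1} := ((u_p)⁻¹)ᵀ is defined, with every term invertible. (Theorem 1.1, (i) ⇒ (iv).) -/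

import Mathlib

open Matrix TensorProduct HopfAlgebra Coalgebra

section Aux

variable {k : Type*} [Field k] {H : Type*} [Ring H] [HopfAlgebra k H] {s : ℕ}

lemma corep_inv_right {x : Matrix (Fin s) (Fin s) H}
    (hx : (∀ i j, Coalgebra.comul (R := k) (x i j) = ∑ c, x i c ⊗ₜ[k] x c j))
    (hx2 : ∀ i j, Coalgebra.counit (R := k) (x i j) = if i = j then (1 : k) else 0)
    (i j : Fin s) :
    ∑ c, x i c * antipode (R := k) (x c j) = if i = j then (1 : H) else 0 := by
  have h := mul_antipode_lTensor_comul_apply (R := k) (x i j)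
  rw [hx i j, hx2 i j] at h
  simpa [map_sum, apply_ite (algebraMap k H)] using h

lemma corep_inv_left {x : Matrix (Fin s) (Fin s) H}
    (hx : (∀ i j, Coalgebra.comul (R := k) (x i j) = ∑ c, x i c ⊗ₜ[k] x c j))
    (hx2 : ∀ i j, Coalgebra.counit (R := k) (x i j) = if i = j then (1 : k) else 0)
    (i j : Fin s) :
    ∑ c, antipode (R := k) (x i c) * x c j = if i = j then (1 : H) else 0 := by
  have h := mul_antipode_rTensor_comul_apply (R := k) (x i j)
  rw [hx i j, hx2 i j] at h
  simpa [map_sum, apply_ite (algebraMap k H)] using h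

lemma counit_antipode_corep {x : Matrix (Fin s) (Fin s) H}
    (hx : (∀ i j, Coalgebra.comul (R := k) (x i j) = ∑ c, x i c ⊗ₜ[k] x c j))
    (hx2 : ∀ i j, Coalgebra.counit (R := k) (x i j) = if i = j then (1 : k) else 0)
    (i j : Fin s) :
    Coalgebra.counit (R := k) (antipode (R := k) (x i j)) = if i = j then (1 : k) else 0 := by
  have h := congrArg (Bialgebra.counitAlgHom k H) (corep_inv_right (k := k) hx hx2 i j)
  simp only [map_sum, _root_.map_mul, apply_ite (Bialgebra.counitAlgHom k H), _root_.map_one,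
    map_zero] at h
  have hc : ∀ c, (Bialgebra.counitAlgHom k H) (x i c) = if i = c then 1 else 0 :=
    fun c => hx2 i c
  simp only [hc, ite_mul, one_mul, zero_mul, Finset.sum_ite_eq, Finset.mem_univ,
    if_true] at h
  exact h

/-- key: comul of antipode on a corepresentation matrix. -/
lemma comul_antipode_corep {x : Matrix (Fin s) (Fin s) H}
    (hx : (∀ i j, Coalgebra.comul (R := k) (x i j) = ∑ c, x i c ⊗ₜ[k] x c j))
    (hx2 : ∀ i j, Coalgebra.counit (R := k) (x i j) = if i = j then (1 : k) else 0)
    (i j : Fin s) :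
    Coalgebra.comul (R := k) (antipode (R := k) (x i j)) =
      ∑ c, antipode (R := k) (x c j) ⊗ₜ[k] antipode (R := k) (x i c) := by
  set D := Bialgebra.comulAlgHom k H with hD
  set S : H → H := fun h => antipode (R := k) h with hS
  -- matrices over H ⊗ H
  set V : Matrix (Fin s) (Fin s) (H ⊗[k] H) := fun i j => D (x i j) with hV
  set Y : Matrix (Fin s) (Fin s) (H ⊗[k] H) := fun i j => D (S (x i j)) with hY
  set Z : Matrix (Fin s) (Fin s) (H ⊗[k] H) := fun i j => ∑ c, S (x c j) ⊗ₜ[k] S (x i c) with hZ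
  set X₁ : Matrix (Fin s) (Fin s) (H ⊗[k] H) := fun i j => x i j ⊗ₜ[k] 1 with hX₁
  set X₂ : Matrix (Fin s) (Fin s) (H ⊗[k] H) := fun i j => (1 : H) ⊗ₜ[k] x i j with hX₂
  set W₁ : Matrix (Fin s) (Fin s) (H ⊗[k] H) := fun i j => S (x i j) ⊗ₜ[k] 1 with hW₁
  set W₂ : Matrix (Fin s) (Fin s) (H ⊗[k] H) := fun i j => (1 : H) ⊗ₜ[k] S (x i j) with hW₂
  have hVfact : V = X₁ * X₂ := by
    ext i j
    rw [Matrix.mul_apply]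
    simp only [hV, Matrix.mul_apply, hX₁, hX₂, Algebra.TensorProduct.tmul_mul_tmul,
      one_mul, mul_one]
    exact hx i j
  have hX2W2 : X₂ * W₂ = 1 := by
    ext i j
    rw [Matrix.mul_apply]
    simp only [Matrix.mul_apply, hX₂, hW₂, Algebra.TensorProduct.tmul_mul_tmul, one_mul]
    rw [← tmul_sum, corep_inv_right (k := k) hx hx2 i j, Matrix.one_apply]
    split <;> simp [Algebra.TensorProduct.one_def]
  have hW2X2 : W₂ * X₂ = 1 := by
    ext i j
    rw [Matrix.mul_apply]
    simp only [Matrix.mul_apply, hX₂, hW₂, Algebra.TensorProduct.tmul_mul_tmul, one_mul]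
    rw [← tmul_sum, corep_inv_left (k := k) hx hx2 i j, Matrix.one_apply]
    split <;> simp [Algebra.TensorProduct.one_def]
  have hX1W1 : X₁ * W₁ = 1 := by
    ext i j
    rw [Matrix.mul_apply]
    simp only [Matrix.mul_apply, hX₁, hW₁, Algebra.TensorProduct.tmul_mul_tmul, mul_one]
    rw [← sum_tmul, corep_inv_right (k := k) hx hx2 i j, Matrix.one_apply]
    split <;> simp [Algebra.TensorProduct.one_def]
  have hW1X1 : W₁ * X₁ = 1 := by
    ext i j
    rw [Matrix.mul_apply]
    simp only [Matrix.mul_apply, hX₁, hW₁, Algebra.TensorProduct.tmul_mul_tmul, mul_one]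
    rw [← sum_tmul, corep_inv_left (k := k) hx hx2 i j, Matrix.one_apply]
    split <;> simp [Algebra.TensorProduct.one_def]
  have hZfact : Z = W₂ * W₁ := by
    ext i j
    rw [Matrix.mul_apply]
    simp [hZ, Matrix.mul_apply, hW₁, hW₂, Algebra.TensorProduct.tmul_mul_tmul]
  have hVZ : V * Z = 1 := by
    rw [hVfact, hZfact]
    rw [mul_assoc X₁ X₂ (W₂ * W₁), ← mul_assoc X₂ W₂ W₁, hX2W2, one_mul, hX1W1]
  have hYV : Y * V = 1 := by
    ext i j
    rw [Matrix.mul_apply]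
    simp only [Matrix.mul_apply, hY, hV, ← _root_.map_mul]
    rw [← map_sum]
    have : ∑ c, S (x i c) * x c j = if i = j then (1 : H) else 0 :=
      corep_inv_left (k := k) hx hx2 i j
    rw [this, Matrix.one_apply]
    split <;> simp
  have hYZ : Y = Z := left_inv_eq_right_inv hYV hVZ
  have := congrFun (congrFun hYZ i) j
  simpa [hY, hZ, hD, Bialgebra.comulAlgHom] using this

end Aux

/-- The sequence of entrywise antipode powers (with alternating transposes). -/
noncomputable def antSeq (k : Type*) [Field k] {H : Type*} [Ring H] [HopfAlgebra k H] {s : ℕ}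
    (v : Matrix (Fin s) (Fin s) H) : ℕ → Matrix (Fin s) (Fin s) H
  | 0 => v
  | p + 1 => fun i j => antipode (R := k) (antSeq k v p j i)

/-- Theorem 1.1, (i) ⇒ (iv): if `u` admits a model `(H, v, π)`, then the
sequence `u₀ := u`, `u_{p+1} := ((u_p)⁻¹)ᵀ` is defined with every term invertible, i.e.
there is a sequence `w` with `w 0 = u` and `w p * (w (p+1))ᵀ = 1 = (w (p+1))ᵀ * w p`. -/
theorem stmt2 {k : Type*} [Field k] {H : Type*} [Ring H] [HopfAlgebra k H]
    {s n : ℕ} (u : Matrix (Fin s) (Fin s) (Matrix (Fin n) (Fin n) k))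
    (v : Matrix (Fin s) (Fin s) H)
    (hv1 : ∀ i j, Coalgebra.comul (R := k) (v i j) = ∑ c, v i c ⊗ₜ[k] v c j)
    (hv2 : ∀ i j, Coalgebra.counit (R := k) (v i j) = if i = j then (1 : k) else 0)
    (π : H →ₐ[k] Matrix (Fin n) (Fin n) k) (hu : v.map π = u) :
    ∃ w : ℕ → Matrix (Fin s) (Fin s) (Matrix (Fin n) (Fin n) k),
      w 0 = u ∧ ∀ p : ℕ, w p * (w (p + 1))ᵀ = 1 ∧ (w (p + 1))ᵀ * w p = 1 := by
  classical
  set X : ℕ → Matrix (Fin s) (Fin s) H := antSeq k v with hXdef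
  have hX0 : X 0 = v := rfl
  have hXs : ∀ p i j, X (p + 1) i j = antipode (R := k) (X p j i) := fun p i j => rfl
  have hC : ∀ p, (∀ i j, Coalgebra.comul (R := k) (X p i j) = ∑ c, X p i c ⊗ₜ[k] X p c j) ∧
      (∀ i j, Coalgebra.counit (R := k) (X p i j) = if i = j then (1 : k) else 0) := by
    intro p
    induction p with
    | zero => exact ⟨hv1, hv2⟩
    | succ p ih =>
      refine ⟨fun i j => ?_, fun i j => ?_⟩
      · rw [hXs p i j, comul_antipode_corep (k := k) ih.1 ih.2 j i]
        exact Finset.sum_congr rfl fun c _ => by rw [hXs p i c, hXs p c j]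
      · rw [hXs p i j, counit_antipode_corep (k := k) ih.1 ih.2 j i]
        simp [eq_comm]
  refine ⟨fun p => (X p).map π, by show (X 0).map π = u; rw [hX0, hu], fun p => ?_⟩
  constructor
  · ext i j
    have : ∑ c, π (X p i c) * π (X (p + 1) j c)
        = π (∑ c, X p i c * antipode (R := k) (X p c j)) := by
      rw [map_sum]
      exact Finset.sum_congr rfl fun c _ => by rw [hXs p j c, _root_.map_mul]
    simp only [Matrix.mul_apply, Matrix.transpose_apply, Matrix.map_apply]
    rw [this, corep_inv_right (k := k) (hC p).1 (hC p).2 i j, Matrix.one_apply]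
    split <;> simp
  · ext i j
    have : ∑ c, π (X (p + 1) c i) * π (X p c j)
        = π (∑ c, antipode (R := k) (X p i c) * X p c j) := by
      rw [map_sum]
      exact Finset.sum_congr rfl fun c _ => by rw [hXs p c i, _root_.map_mul]
    simp only [Matrix.mul_apply, Matrix.transpose_apply, Matrix.map_apply]
    rw [this, corep_inv_left (k := k) (hC p).1 (hC p).2 i j, Matrix.one_apply]
    split <;> simp
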